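/- (K = N headline achievability: recovering N_r generic linear combinations at the cost of gradient coding.) Let N_r ≤ N, K = N, K_c = N_r, and use the cyclic assignment Z_n = {n, n+1, …, n+(N−N_r)} ⊆ ZMod N. The number of matrices F ∈ Matrix (Fin N_r) (ZMod N) 𝔽_q for which there exist row vectors b_n ∈ 𝔽_q^{N} (n ∈ ZMod N), each b_n vanishing at all coordinates outside Z_n, such that for every A ⊆ ZMod N with |A| = N_r every row of F lies in the 𝔽_q-span of {b_n : n ∈ A}, is at least (1 − C(N, N_r)·( N·(N_r − 1)² + N_r! · N_r² )/q) · q^{N_r·N}, where C(·,·) denotes the binomial coefficient. In particular, with each of the N workers sending a single linear combination of its assigned messages, any N_r answers determine all N_r demanded linear combinations, for a fraction of demand matrices tending to 1 as q → ∞. -/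

import Mathlib

set_option linter.unusedSectionVars false
set_option maxHeartbeats 1600000
open Finset MvPolynomial


variable {F : Type*} [Field F] [Fintype F] [DecidableEq F]

lemma sz_nonzero_count : ∀ (n : ℕ) (p : MvPolynomial (Fin n) F), p ≠ 0 →
    ∀ (d : Fin n → ℕ), (∀ i, p.degreeOf i ≤ d i) →
    ∏ i, (Fintype.card F - d i) ≤
      (Finset.univ.filter (fun v : Fin n → F => MvPolynomial.eval v p ≠ 0)).card := by
  intro n
  induction n with
  | zero =>
      intro p hp d _
      obtain ⟨a, rfl⟩ := MvPolynomial.C_surjective (Fin 0) p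
      have ha : a ≠ 0 := fun h => hp (by simp [h])
      simp only [Finset.prod_empty, MvPolynomial.eval_C]
      rw [Finset.filter_true_of_mem (fun _ _ => ha)]
      simp [Finset.card_univ]
  | succ n ih =>
      intro p hp d hd
      set q := Fintype.card F with hqdef
      set Q := finSuccEquiv F n p with hQ
      have hQ0 : Q ≠ 0 := by simp [hQ, hp]
      set k := Q.natDegree with hk
      have hlead : Q.coeff k ≠ 0 := Polynomial.leadingCoeff_ne_zero.mpr hQ0
      have hkd : k ≤ d 0 := by
        rw [hk, hQ, natDegree_finSuccEquiv]; exact hd 0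
      have htail := ih (Q.coeff k) hlead (fun j => d j.succ)
        (fun j => le_trans (degreeOf_coeff_finSuccEquiv p j k) (hd j.succ))
      set Stail := Finset.univ.filter
        (fun s : Fin n → F => MvPolynomial.eval s (Q.coeff k) ≠ 0) with hStail
      have key : ∀ s ∈ Stail, q - d 0 ≤
          (Finset.univ.filter (fun y : F => MvPolynomial.eval (Fin.cons y s) p ≠ 0)).card := by
        intro s hs
        rw [hStail, Finset.mem_filter] at hs
        set Qs := Q.map (MvPolynomial.eval s) with hQs
        have hQs0 : Qs ≠ 0 := by
          intro h
          apply hs.2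
          have : Qs.coeff k = 0 := by rw [h]; simp
          rwa [hQs, Polynomial.coeff_map] at this
        have hzeros : (Finset.univ.filter (fun y : F => Polynomial.eval y Qs = 0)).card ≤ d 0 := by
          have h1 : (Finset.univ.filter (fun y : F => Polynomial.eval y Qs = 0)) ⊆
              Qs.roots.toFinset := by
            intro y hy
            rw [Finset.mem_filter] at hy
            rw [Multiset.mem_toFinset, Polynomial.mem_roots hQs0]
            exact hy.2
          calc (Finset.univ.filter (fun y : F => Polynomial.eval y Qs = 0)).card
              ≤ Qs.roots.toFinset.card := Finset.card_le_card h1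
            _ ≤ Multiset.card Qs.roots := Qs.roots.toFinset_card_le
            _ ≤ Qs.natDegree := Qs.card_roots'
            _ ≤ Q.natDegree := Polynomial.natDegree_map_le
            _ ≤ d 0 := hkd
        have hcardF : (Finset.univ : Finset F).card = q := by simp [hqdef]
        have hsplit := Finset.card_filter_add_card_filter_not
          (s := (Finset.univ : Finset F)) (p := fun y => Polynomial.eval y Qs = 0)
        have heq : (Finset.univ.filter (fun y : F => MvPolynomial.eval (Fin.cons y s) p ≠ 0))
            = (Finset.univ.filter (fun y : F => ¬ Polynomial.eval y Qs = 0)) := by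
          apply Finset.filter_congr
          intro y _
          rw [MvPolynomial.eval_eq_eval_mv_eval', hQs, hQ]
        rw [heq]
        omega
      -- assemble via disjoint union over tails
      set g : (Fin n → F) → Finset (Fin (n+1) → F) := fun s =>
        ((Finset.univ.filter (fun y : F => MvPolynomial.eval (Fin.cons y s) p ≠ 0)).image
            (fun y => Fin.cons y s)) with hg
      set T := Finset.univ.filter (fun v : Fin (n+1) → F => MvPolynomial.eval v p ≠ 0) with hT
      have hsub : Stail.biUnion g ⊆ T := by
        intro v hv
        rw [Finset.mem_biUnion] at hv
        obtain ⟨s, _, hv⟩ := hv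
        rw [hg, Finset.mem_image] at hv
        obtain ⟨y, hy, rfl⟩ := hv
        rw [Finset.mem_filter] at hy
        rw [hT, Finset.mem_filter]
        exact ⟨Finset.mem_univ _, hy.2⟩
      have hdisj : ∀ s₁ ∈ Stail, ∀ s₂ ∈ Stail, s₁ ≠ s₂ → Disjoint (g s₁) (g s₂) := by
        intro s₁ _ s₂ _ hne
        rw [Finset.disjoint_left]
        intro v hv1 hv2
        rw [hg, Finset.mem_image] at hv1 hv2
        obtain ⟨y₁, _, rfl⟩ := hv1
        obtain ⟨y₂, _, h2⟩ := hv2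
        apply hne
        have := congrArg Fin.tail h2
        simpa [Fin.tail_cons] using this.symm
      calc ∏ i : Fin (n+1), (q - d i)
          = (q - d 0) * ∏ j : Fin n, (q - d j.succ) := by
            rw [Fin.prod_univ_succ]
        _ ≤ (q - d 0) * Stail.card := by
            exact Nat.mul_le_mul_left _ htail
        _ = ∑ _s ∈ Stail, (q - d 0) := by rw [Finset.sum_const, smul_eq_mul, mul_comm]
        _ ≤ ∑ s ∈ Stail, (g s).card := by
            apply Finset.sum_le_sum
            intro s hs
            rw [hg, Finset.card_image_of_injective _ (fun a b h => by
              simpa using congrArg (fun v : Fin (n+1) → F => v 0) h)]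
            exact key s hs
        _ = (Stail.biUnion g).card := (Finset.card_biUnion hdisj).symm
        _ ≤ T.card := Finset.card_le_card hsub

lemma sz_prod_sub_bound (q : ℕ) : ∀ (n : ℕ) (d : Fin n → ℕ),
    q ^ n ≤ ∏ i, (q - d i) + (∑ i, d i) * q ^ (n - 1) := by
  intro n
  induction n with
  | zero => intro d; simp
  | succ n ih =>
      intro d
      rcases Nat.eq_zero_or_pos n with hn | hn
      · subst hn
        show q ^ 1 ≤ (∏ i : Fin 1, (q - d i)) + (∑ i : Fin 1, d i) * q ^ 0
        rw [Fin.prod_univ_one, Fin.sum_univ_one, pow_one, pow_zero, mul_one]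
        omega
      have ihd := ih (fun j => d j.succ)
      have hP : ∏ j : Fin n, (q - d j.succ) ≤ q ^ n := by
        calc ∏ j : Fin n, (q - d j.succ) ≤ ∏ _j : Fin n, q :=
              Finset.prod_le_prod' (fun i _ => Nat.sub_le _ _)
          _ = q ^ n := by simp
      have hqq : q * q ^ (n - 1) = q ^ n := by
        obtain ⟨k, rfl⟩ : ∃ k, n = k + 1 := ⟨n - 1, by omega⟩
        rw [Nat.add_sub_cancel, pow_succ]
        ring
      calc q ^ (n + 1) = q * q ^ n := by rw [pow_succ, mul_comm]
        _ ≤ q * (∏ j : Fin n, (q - d j.succ) + (∑ j : Fin n, d j.succ) * q ^ (n - 1)) :=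
            Nat.mul_le_mul_left _ ihd
        _ = q * ∏ j : Fin n, (q - d j.succ) + (∑ j : Fin n, d j.succ) * (q * q ^ (n - 1)) := by
            ring
        _ ≤ ((q - d 0) + d 0) * ∏ j : Fin n, (q - d j.succ)
              + (∑ j : Fin n, d j.succ) * q ^ n := by
            rw [hqq]
            exact Nat.add_le_add_right (Nat.mul_le_mul_right _ (by omega)) _
        _ ≤ (q - d 0) * ∏ j : Fin n, (q - d j.succ)
              + (d 0 + ∑ j : Fin n, d j.succ) * q ^ n := by
            rw [add_mul, add_mul]
            have : d 0 * ∏ j : Fin n, (q - d j.succ) ≤ d 0 * q ^ n :=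
              Nat.mul_le_mul_left _ hP
            omega
        _ = ∏ i : Fin (n+1), (q - d i) + (∑ i : Fin (n+1), d i) * q ^ (n + 1 - 1) := by
            rw [Fin.prod_univ_succ, Fin.sum_univ_succ, Nat.add_sub_cancel]

lemma sz_zero_count {ι : Type*} [Fintype ι] [DecidableEq ι]
    (p : MvPolynomial ι F) (hp : p ≠ 0) (d : ι → ℕ) (hd : ∀ i, p.degreeOf i ≤ d i) :
    (Finset.univ.filter (fun v : ι → F => MvPolynomial.eval v p = 0)).card ≤
      (∑ i, d i) * (Fintype.card F) ^ (Fintype.card ι - 1) := by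
  classical
  set m := Fintype.card ι with hm
  set e := Fintype.equivFin ι with he
  set p' := MvPolynomial.rename e p with hp'
  have hp'0 : p' ≠ 0 := by
    rw [hp']
    exact fun h => hp ((MvPolynomial.rename_injective e e.injective) (by simpa using h))
  have hd' : ∀ j : Fin m, p'.degreeOf j ≤ d (e.symm j) := by
    intro j
    rw [hp']
    have := MvPolynomial.degreeOf_rename_of_injective (p := p) (f := e) e.injective (e.symm j)
    rw [Equiv.apply_symm_apply] at this
    rw [this]
    exact hd _
  have hnon := sz_nonzero_count m p' hp'0 (fun j => d (e.symm j)) hd'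
  beta_reduce at hnon
  have harith := sz_prod_sub_bound (Fintype.card F) m (fun j => d (e.symm j))
  have hsum : ∑ j : Fin m, d (e.symm j) = ∑ i, d i := Equiv.sum_comp e.symm d
  have hcardfun : (Finset.univ : Finset (Fin m → F)).card = (Fintype.card F) ^ m := by
    simp [Finset.card_univ]
  have hsplit := Finset.card_filter_add_card_filter_not
    (s := (Finset.univ : Finset (Fin m → F))) (p := fun v => MvPolynomial.eval v p' = 0)
  -- zeros over Fin m bound
  have hz : (Finset.univ.filter (fun v : Fin m → F => MvPolynomial.eval v p' = 0)).card ≤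
      (∑ i, d i) * (Fintype.card F) ^ (m - 1) := by
    rw [← hsum]
    have : (Finset.univ.filter (fun v : Fin m → F => ¬ MvPolynomial.eval v p' = 0)).card =
        (Finset.univ.filter (fun v : Fin m → F => MvPolynomial.eval v p' ≠ 0)).card := rfl
    omega
  -- transfer by bijection
  have hbij : (Finset.univ.filter (fun v : ι → F => MvPolynomial.eval v p = 0)).card =
      (Finset.univ.filter (fun v : Fin m → F => MvPolynomial.eval v p' = 0)).card := by
    apply Finset.card_bij (fun (v : ι → F) _ => v ∘ e.symm)
    · intro v hv
      rw [Finset.mem_filter] at hv ⊢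
      refine ⟨Finset.mem_univ _, ?_⟩
      rw [hp', MvPolynomial.eval_rename]
      have : (v ∘ e.symm) ∘ e = v := by ext i; simp
      rw [this]
      exact hv.2
    · intro v₁ _ v₂ _ h
      ext i
      have := congrFun h (e i)
      simpa using this
    · intro w hw
      rw [Finset.mem_filter] at hw
      refine ⟨w ∘ e, Finset.mem_filter.mpr ⟨Finset.mem_univ _, ?_⟩, by ext j; simp⟩
      have := hw.2
      rw [hp', MvPolynomial.eval_rename] at this
      exact this
  rw [hbij]
  exact hz

lemma sz_exists {ι : Type*} [Fintype ι] [DecidableEq ι] [Nonempty ι]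
    (p : MvPolynomial ι F) (hp : p ≠ 0) (d : ι → ℕ) (hd : ∀ i, p.degreeOf i ≤ d i)
    (hq : ∑ i, d i < Fintype.card F) : ∃ v : ι → F, MvPolynomial.eval v p ≠ 0 := by
  by_contra h
  push_neg at h
  have hzc := sz_zero_count p hp d hd
  have hall : (Finset.univ.filter (fun v : ι → F => MvPolynomial.eval v p = 0)) =
      Finset.univ := Finset.filter_true_of_mem (fun v _ => h v)
  rw [hall] at hzc
  have hcard : (Finset.univ : Finset (ι → F)).card = (Fintype.card F) ^ (Fintype.card ι) := by
    simp [Finset.card_univ]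
  rw [hcard] at hzc
  have hm : 1 ≤ Fintype.card ι := Fintype.card_pos
  have : (Fintype.card F) ^ (Fintype.card ι) = Fintype.card F * (Fintype.card F) ^ (Fintype.card ι - 1) := by
    obtain ⟨k, hk⟩ : ∃ k, Fintype.card ι = k + 1 := ⟨Fintype.card ι - 1, by omega⟩
    rw [hk, Nat.add_sub_cancel, pow_succ]
    ring
  rw [this] at hzc
  have hqpos : 0 < (Fintype.card F) ^ (Fintype.card ι - 1) := pow_pos Fintype.card_pos _
  have := Nat.le_of_mul_le_mul_right hzc hqpos
  omega



section DetAux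
variable {R : Type*} [CommRing R] {k : ℕ}

lemma det_updateRow_finset_sum {ι : Type*} [DecidableEq ι] [Fintype ι]
    (M : Matrix ι ι R) (j : ι) {α : Type*} (s : Finset α) (f : α → ι → R) :
    (M.updateRow j (∑ a ∈ s, f a)).det = ∑ a ∈ s, (M.updateRow j (f a)).det := by
  classical
  induction s using Finset.induction_on with
  | empty =>
      rw [Finset.sum_empty, Finset.sum_empty]
      exact Matrix.det_eq_zero_of_row_eq_zero j (fun i => by simp)
  | insert _ _ hk ih =>
      rw [Finset.sum_insert hk, Finset.sum_insert hk, Matrix.det_updateRow_add, ih]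

lemma degreeOf_det_le {σ : Type*} {F : Type*} [CommRing F] [DecidableEq σ]
    {ι : Type*} [DecidableEq ι] [Fintype ι]
    (M : Matrix ι ι (MvPolynomial σ F)) (x : σ) (g : ι → ℕ)
    (h : ∀ t i, (M t i).degreeOf x ≤ g t) :
    M.det.degreeOf x ≤ ∑ t, g t := by
  rw [Matrix.det_apply]
  refine le_trans (MvPolynomial.degreeOf_sum_le _ _ _) ?_
  rw [Finset.sup_le_iff]
  intro σp _
  have h1 : ((Equiv.Perm.sign σp : ℤ) • ∏ i, M (σp i) i).degreeOf x
      ≤ (∏ i, M (σp i) i).degreeOf x := by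
    rcases Int.units_eq_one_or (Equiv.Perm.sign σp) with hs | hs <;>
      simp [hs, MvPolynomial.degreeOf]
  refine le_trans h1 (le_trans (MvPolynomial.degreeOf_prod_le _ _ _) ?_)
  calc ∑ i, (M (σp i) i).degreeOf x ≤ ∑ i, g (σp i) :=
        Finset.sum_le_sum (fun i _ => h (σp i) i)
    _ = ∑ t, g t := Equiv.sum_comp σp g

end DetAux

lemma strictMono_fin_gap {m : ℕ} (f : Fin m → ℕ) (hf : StrictMono f) :
    ∀ (k : ℕ) (i j : Fin m), (j : ℕ) = (i : ℕ) + k → f i + k ≤ f j := by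
  intro k
  induction k with
  | zero =>
      intro i j hij
      have : i = j := Fin.ext (by omega)
      subst this
      omega
  | succ k ih =>
      intro i j hij
      have hjk : (i : ℕ) + k < m := by omega
      have h1 := ih i ⟨(i : ℕ) + k, hjk⟩ rfl
      have h2 : f ⟨(i : ℕ) + k, hjk⟩ < f j := hf (by simp [Fin.lt_def, hij])
      omega



section Construction
variable {N m : ℕ} [NeZero N] {R : Type*} [CommRing R]

/-- the `(m+1) × (m+1)` matrix whose first `m` rows are the columns
`n-1, …, n-m` of `g` and whose last row is `v`. -/
def Wg (g : Fin (m+1) → ZMod N → R) (n : ZMod N) (v : Fin (m+1) → R) :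
    Matrix (Fin (m+1)) (Fin (m+1)) R :=
  Matrix.of fun t i => Fin.lastCases (v i) (fun t' : Fin m => g i (n - 1 - (t' : ℕ))) t

/-- the cofactor vector of worker `n` -/
def cg (g : Fin (m+1) → ZMod N → R) (n : ZMod N) (i : Fin (m+1)) : R :=
  (Wg g n (Pi.single i 1)).det

lemma Wg_apply_castSucc (g : Fin (m+1) → ZMod N → R) (n : ZMod N) (v : Fin (m+1) → R)
    (t' : Fin m) (i : Fin (m+1)) :
    Wg g n v (Fin.castSucc t') i = g i (n - 1 - (t' : ℕ)) := by
  simp [Wg]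

lemma Wg_apply_last (g : Fin (m+1) → ZMod N → R) (n : ZMod N) (v : Fin (m+1) → R)
    (i : Fin (m+1)) : Wg g n v (Fin.last m) i = v i := by
  simp [Wg]

lemma Wg_eq_updateRow (g : Fin (m+1) → ZMod N → R) (n : ZMod N) (v w : Fin (m+1) → R) :
    Wg g n v = (Wg g n w).updateRow (Fin.last m) v := by
  ext t i
  refine Fin.lastCases ?_ (fun t' => ?_) t
  · rw [Matrix.updateRow_self, Wg_apply_last]
  · rw [Matrix.updateRow_ne (Fin.castSucc_lt_last t').ne, Wg_apply_castSucc, Wg_apply_castSucc]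

/-- multilinearity in the last row -/
lemma det_Wg_eq_sum (g : Fin (m+1) → ZMod N → R) (n : ZMod N) (v : Fin (m+1) → R) :
    (Wg g n v).det = ∑ i, v i * cg g n i := by
  have hv : v = ∑ i : Fin (m+1), v i • (Pi.single i (1 : R) : Fin (m+1) → R) := by
    ext i'
    rw [Finset.sum_apply]
    simp [Pi.single_apply, mul_comm]
  calc (Wg g n v).det
      = ((Wg g n v).updateRow (Fin.last m) (∑ i : Fin (m+1), v i • (Pi.single i (1:R) : Fin (m+1) → R))).det := by
        rw [← hv, ← Wg_eq_updateRow]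
    _ = ∑ i : Fin (m+1), ((Wg g n v).updateRow (Fin.last m) (v i • (Pi.single i (1:R) : Fin (m+1) → R))).det :=
        det_updateRow_finset_sum _ _ _ _
    _ = ∑ i, v i * cg g n i := by
        refine Finset.sum_congr rfl (fun i _ => ?_)
        rw [Matrix.det_updateRow_smul, ← Wg_eq_updateRow g n (Pi.single i 1) v]
        rfl

/-- vanishing: substituting one of the first `m` columns for `v` kills the determinant. -/
lemma det_Wg_col_eq_zero (g : Fin (m+1) → ZMod N → R) (n : ZMod N) (t' : Fin m) :
    (Wg g n (fun i => g i (n - 1 - (t' : ℕ)))).det = 0 := by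
  apply Matrix.det_zero_of_row_eq (Fin.castSucc_lt_last t').ne
  ext i
  rw [Wg_apply_castSucc, Wg_apply_last]

/-- ring-hom compatibility -/
lemma cg_map {R' : Type*} [CommRing R'] (φ : R →+* R') (g : Fin (m+1) → ZMod N → R)
    (n : ZMod N) (i : Fin (m+1)) :
    φ (cg g n i) = cg (fun i' s => φ (g i' s)) n i := by
  rw [cg, RingHom.map_det, cg]
  congr 1
  ext t i'
  refine Fin.lastCases ?_ (fun t' => ?_) t
  · rw [RingHom.mapMatrix_apply, Matrix.map_apply, Wg_apply_last, Wg_apply_last]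
    by_cases h : i' = i <;> simp [Pi.single_apply, h]
  · rw [RingHom.mapMatrix_apply, Matrix.map_apply, Wg_apply_castSucc, Wg_apply_castSucc]

end Construction



section ZModAux
variable {N : ℕ} [NeZero N]

lemma zmod_sub_val_of_lt {u d : ℕ} (hu : u < d) (hd : d < N) :
    ((u : ZMod N) - (d : ZMod N)).val = N + u - d := by
  have h1 : ((u : ZMod N) - (d : ZMod N)) = ((N + u - d : ℕ) : ZMod N) := by
    have : (((N + u - d : ℕ)) : ZMod N) = ((N : ℕ) : ZMod N) + u - d := by
      push_cast [Nat.cast_sub (by omega : d ≤ N + u)]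
      ring
    rw [this, ZMod.natCast_self, zero_add]
  rw [h1, ZMod.val_cast_of_lt (by omega)]

/-- the complement window: `{n-1, n-2, …, n-m}` -/
def Scol (m : ℕ) (n : ZMod N) : Finset (ZMod N) :=
  (Finset.range m).image fun j : ℕ => n - 1 - (j : ZMod N)

lemma mem_Scol_iff {m : ℕ} (hm : m < N) (n s : ZMod N) :
    s ∈ Scol m n ↔ (n - 1 - s).val < m := by
  constructor
  · rintro hs
    rw [Scol, Finset.mem_image] at hs
    obtain ⟨j, hj, rfl⟩ := hs
    rw [Finset.mem_range] at hj
    have : n - 1 - (n - 1 - (j : ZMod N)) = (j : ZMod N) := by ring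
    rw [this, ZMod.val_cast_of_lt (by omega)]
    exact hj
  · intro h
    rw [Scol, Finset.mem_image]
    refine ⟨(n - 1 - s).val, Finset.mem_range.mpr h, ?_⟩
    rw [ZMod.natCast_val, ZMod.cast_id]
    ring

lemma card_Scol_le {m : ℕ} (n : ZMod N) : (Scol m n).card ≤ m :=
  le_trans (Finset.card_image_le) (by simp)

lemma mem_Scol_of_not_mem_Z {m : ℕ} (hm : m + 1 ≤ N) (n c : ZMod N)
    (hc : c ∉ (Finset.range (N - (m+1) + 1)).image fun j : ℕ => n + (j : ZMod N)) :
    c ∈ Scol m n := by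
  set t := (c - n).val with ht
  have htN : t < N := ZMod.val_lt _
  have hcn : c = n + (t : ZMod N) := by
    rw [ht, ZMod.natCast_val, ZMod.cast_id]
    ring
  have htlarge : N - m ≤ t := by
    by_contra hsmall
    apply hc
    rw [Finset.mem_image]
    exact ⟨t, Finset.mem_range.mpr (by omega), hcn.symm⟩
  rw [Scol, Finset.mem_image]
  refine ⟨N - 1 - t, Finset.mem_range.mpr (by omega), ?_⟩
  rw [hcn]
  have hcast : ((N - 1 - t : ℕ) : ZMod N) = ((N : ℕ) : ZMod N) - 1 - (t : ZMod N) := by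
    push_cast [Nat.cast_sub (by omega : t ≤ N - 1), Nat.cast_sub (by omega : 1 ≤ N)]
    ring
  rw [hcast, ZMod.natCast_self]
  ring
end ZModAux

section PolyAux
variable {N m : ℕ} [NeZero N] {F : Type} [Field F]

/-- generic-with-zero-pattern minor matrix for worker `j` within enumeration `nn` -/
noncomputable def Dmat (nn : Fin (m+1) → ZMod N) (j : Fin (m+1)) :
    Matrix (Fin m) (Fin m) (MvPolynomial (Fin (m+1) × ZMod N) F) :=
  Matrix.of fun t r =>
    if (nn j - 1 - ((t : ℕ) : ZMod N)) ∈ Scol m (nn (j.succAbove r)) then 0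
    else MvPolynomial.X (j.succAbove r, nn j - 1 - ((t : ℕ) : ZMod N))

noncomputable def Dpoly (nn : Fin (m+1) → ZMod N) (j : Fin (m+1)) :
    MvPolynomial (Fin (m+1) × ZMod N) F :=
  (Dmat nn j).det

lemma Dpoly_ne_zero (hm : m + 1 ≤ N) (nn : Fin (m+1) → ZMod N)
    (hinj : Function.Injective nn) (j : Fin (m+1)) :
    (Dpoly (F := F) nn j) ≠ 0 := by
  classical
  rcases Nat.eq_zero_or_pos m with hm0 | hm0
  · subst hm0
    rw [Dpoly, Matrix.det_fin_zero]
    exact one_ne_zero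
  set dd : Fin m → ℕ := fun r => (nn j - nn (j.succAbove r)).val with hdd
  have hdpos : ∀ r, 1 ≤ dd r := by
    intro r
    have hne : nn j - nn (j.succAbove r) ≠ 0 := by
      intro h
      exact (Fin.succAbove_ne j r) (hinj (sub_eq_zero.mp h)).symm
    have h2 : (nn j - nn (j.succAbove r)).val ≠ 0 :=
      (ZMod.val_eq_zero (nn j - nn (j.succAbove r))).not.mpr hne
    have h3 : dd r = (nn j - nn (j.succAbove r)).val := rfl
    omega
  have hdlt : ∀ r, dd r < N := fun r => ZMod.val_lt _
  have hdinj : Function.Injective dd := by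
    intro r₁ r₂ h
    have h2 : nn j - nn (j.succAbove r₁) = nn j - nn (j.succAbove r₂) :=
      ZMod.val_injective N h
    have h3 : nn (j.succAbove r₁) = nn (j.succAbove r₂) := by
      have h4 := congrArg (fun z => nn j - z) (sub_right_injective h2)
      exact sub_right_injective h2
    exact Fin.succAbove_right_injective (hinj h3)
  set Ds : Finset ℕ := Finset.image dd Finset.univ with hDs
  have hDscard : Ds.card = m := by
    rw [hDs, Finset.card_image_of_injective _ hdinj, Finset.card_univ, Fintype.card_fin]
  set f : Fin m ≃o {x // x ∈ Ds} := Ds.orderIsoOfFin hDscard with hf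
  have fmono : StrictMono (fun i : Fin m => ((f i : ℕ))) := by
    intro a b hab
    exact Subtype.coe_lt_coe.mpr (f.lt_iff_lt.mpr hab)
  have hDsmem : ∀ a ∈ Ds, 1 ≤ a ∧ a < N := by
    intro a ha
    rw [hDs, Finset.mem_image] at ha
    obtain ⟨r, _, rfl⟩ := ha
    exact ⟨hdpos r, hdlt r⟩
  set τ : Fin m → Fin m := fun r => f.symm ⟨dd r, by
    rw [hDs]; exact Finset.mem_image_of_mem dd (Finset.mem_univ r)⟩ with hτ
  have hfτ : ∀ r, ((f (τ r) : ℕ)) = dd r := by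
    intro r
    rw [hτ, OrderIso.apply_symm_apply]
  have hτinj : Function.Injective τ := by
    intro r₁ r₂ h
    apply hdinj
    rw [← hfτ r₁, ← hfτ r₂, h]
  have hlow : ∀ r, (τ r : ℕ) + 1 ≤ dd r := by
    intro r
    have h1 := strictMono_fin_gap _ fmono (τ r : ℕ) ⟨0, hm0⟩ (τ r) (by simp)
    have h2 : 1 ≤ (f ⟨0, hm0⟩ : ℕ) := (hDsmem _ (f ⟨0, hm0⟩).2).1
    have h3 := hfτ r
    omega
  have hup : ∀ r, dd r + ((m - 1) - (τ r : ℕ)) ≤ N - 1 := by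
    intro r
    have hτlt : (τ r : ℕ) < m := (τ r).2
    have h1 := strictMono_fin_gap _ fmono ((m - 1) - (τ r : ℕ)) (τ r) ⟨m - 1, by omega⟩
      (by simp only [Fin.val_mk]; omega)
    have h2 : (f ⟨m - 1, by omega⟩ : ℕ) < N := (hDsmem _ (f ⟨m - 1, by omega⟩).2).2
    have h3 := hfτ r
    omega
  set y : (Fin (m+1) × ZMod N) → F := fun x =>
    if ∃ r : Fin m, x.1 = j.succAbove r ∧ x.2 = nn j - 1 - ((τ r : ℕ) : ZMod N) then 1 else 0
    with hy
  have hcastinj : ∀ t₁ t₂ : Fin m, ((t₁ : ℕ) : ZMod N) = ((t₂ : ℕ) : ZMod N) → t₁ = t₂ := by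
    intro t₁ t₂ h
    have h1 : (((t₁ : ℕ) : ZMod N)).val = (t₁ : ℕ) := ZMod.val_cast_of_lt (by omega)
    have h2 : (((t₂ : ℕ) : ZMod N)).val = (t₂ : ℕ) := ZMod.val_cast_of_lt (by omega)
    apply Fin.ext
    rw [← h1, ← h2, h]
  have hcastdd : ∀ r, ((dd r : ℕ) : ZMod N) = nn j - nn (j.succAbove r) := by
    intro r
    rw [hdd]
    rw [ZMod.natCast_val, ZMod.cast_id]
  have hmatch : ∀ r, (nn j - 1 - ((τ r : ℕ) : ZMod N)) ∉ Scol m (nn (j.succAbove r)) := by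
    intro r hmem
    rw [mem_Scol_iff (by omega)] at hmem
    have harr : nn (j.succAbove r) - 1 - (nn j - 1 - ((τ r : ℕ) : ZMod N)) =
        ((τ r : ℕ) : ZMod N) - ((dd r : ℕ) : ZMod N) := by
      rw [hcastdd]
      ring
    rw [harr, zmod_sub_val_of_lt (by have := hlow r; omega) (hdlt r)] at hmem
    have h1 := hup r
    have h2 := hlow r
    have h3 : (τ r : ℕ) < m := (τ r).2
    omega
  have hE : ∀ t r, MvPolynomial.eval y (Dmat (F := F) nn j t r)
      = if t = τ r then 1 else 0 := by
    intro t r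
    rw [Dmat]
    simp only [Matrix.of_apply]
    by_cases hc : (nn j - 1 - ((t : ℕ) : ZMod N)) ∈ Scol m (nn (j.succAbove r))
    · rw [if_pos hc, map_zero]
      have hne : t ≠ τ r := by
        intro h
        subst h
        exact hmatch r hc
      rw [if_neg hne]
    · rw [if_neg hc, MvPolynomial.eval_X]
      simp only [hy]
      by_cases ht : t = τ r
      · rw [if_pos ⟨r, rfl, by rw [ht]⟩, if_pos ht]
      · have hcond : ¬ ∃ r' : Fin m, j.succAbove r = j.succAbove r' ∧
            nn j - 1 - ((t : ℕ) : ZMod N) = nn j - 1 - ((τ r' : ℕ) : ZMod N) := by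
          rintro ⟨r', hr1, hr2⟩
          have hrr : r' = r := Fin.succAbove_right_injective hr1.symm
          subst hrr
          apply ht
          apply hcastinj
          have hcanc : ∀ u : ZMod N, nn j - 1 - (nn j - 1 - u) = u := fun u => by ring
          rw [← hcanc (((t : ℕ) : ZMod N)), ← hcanc (((τ r' : ℕ) : ZMod N)), hr2]
        rw [if_neg hcond, if_neg ht]
  -- permutation matrix determinant
  set σp : Equiv.Perm (Fin m) := Equiv.ofBijective τ (Finite.injective_iff_bijective.mp hτinj)
    with hσp
  have hdet : MvPolynomial.eval y (Dpoly (F := F) nn j) = (σp.permMatrix F).transpose.det := by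
    rw [Dpoly, RingHom.map_det]
    congr 1
    ext t r
    rw [RingHom.mapMatrix_apply, Matrix.map_apply, hE, Matrix.transpose_apply]
    have : σp r = τ r := rfl
    rw [Equiv.Perm.permMatrix, PEquiv.toMatrix_apply, Equiv.toPEquiv_apply, this]
    simp only [Option.mem_some_iff]
    by_cases h : t = τ r
    · rw [if_pos h, if_pos h.symm]
    · rw [if_neg h, if_neg (Ne.symm h)]
  have hsign : (σp.permMatrix F).transpose.det ≠ 0 := by
    rw [Matrix.det_transpose, Matrix.det_permutation]
    rcases Int.units_eq_one_or (Equiv.Perm.sign σp) with h | h <;> rw [h] <;> simp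
  intro h0
  rw [h0, map_zero] at hdet
  exact hsign hdet.symm

lemma sum_ite_col {hm : m < N} (n s : ZMod N) :
    (∑ t' : Fin m, if s = n - 1 - ((t' : ℕ) : ZMod N) then (1:ℕ) else 0) ≤
      (if s ∈ Scol m n then 1 else 0) := by
  classical
  by_cases hmem : s ∈ Scol m n
  · rw [if_pos hmem, Finset.sum_boole, Nat.cast_id]
    apply Finset.card_le_one.mpr ?_
    intro t₁ h₁ t₂ h₂
    rw [Finset.mem_filter] at h₁ h₂
    apply Fin.ext
    have he : ((t₁:ℕ) : ZMod N) = ((t₂:ℕ) : ZMod N) := by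
      have : n - 1 - ((t₁:ℕ) : ZMod N) = n - 1 - ((t₂:ℕ) : ZMod N) := by
        rw [← h₁.2, ← h₂.2]
      have hc : ∀ u : ZMod N, n - 1 - (n - 1 - u) = u := fun u => by ring
      rw [← hc ((t₁:ℕ) : ZMod N), ← hc ((t₂:ℕ) : ZMod N), this]
    have h3 : (((t₁ : ℕ) : ZMod N)).val = (t₁ : ℕ) := ZMod.val_cast_of_lt (by omega)
    have h4 : (((t₂ : ℕ) : ZMod N)).val = (t₂ : ℕ) := ZMod.val_cast_of_lt (by omega)
    rw [← h3, ← h4, he]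
  · rw [if_neg hmem]
    apply le_of_eq
    apply Finset.sum_eq_zero
    intro t' _
    rw [if_neg]
    intro h
    exact hmem (by rw [Scol, Finset.mem_image]; exact ⟨(t' : ℕ), Finset.mem_range.mpr t'.2, h.symm⟩)

lemma degreeOf_cg_le (hm : m < N) (n : ZMod N) (i : Fin (m+1)) (x : Fin (m+1) × ZMod N) :
    ((cg (fun i' s => (MvPolynomial.X (i', s) : MvPolynomial (Fin (m+1) × ZMod N) F)) n i)).degreeOf x
      ≤ if x.2 ∈ Scol m n then 1 else 0 := by
  classical
  rw [cg]
  refine le_trans (degreeOf_det_le (Wg (fun i' s => (MvPolynomial.X (i', s) :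
    MvPolynomial (Fin (m+1) × ZMod N) F)) n (Pi.single i 1)) x
    (fun t => Fin.lastCases 0 (fun t' => if x.2 = n - 1 - ((t' : ℕ) : ZMod N) then 1 else 0) t)
    ?_) ?_
  · intro t i'
    refine Fin.lastCases ?_ (fun t' => ?_) t
    · rw [Wg_apply_last]
      simp only [Fin.lastCases_last]
      have h1 : MvPolynomial.degreeOf x (1 : MvPolynomial (Fin (m+1) × ZMod N) F) = 0 := by
        simpa using MvPolynomial.degreeOf_C (σ := Fin (m+1) × ZMod N) (1 : F) x
      by_cases h : i' = i <;> simp [Pi.single_apply, h, h1]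
    · rw [Wg_apply_castSucc]
      simp only [Fin.lastCases_castSucc]
      by_cases h : x = (i', n - 1 - ((t' : ℕ) : ZMod N))
      · rw [if_pos (by rw [h])]
        rw [h, MvPolynomial.degreeOf_X]
        simp
      · rw [MvPolynomial.degreeOf_X, if_neg h]
        exact Nat.zero_le _
  · rw [Fin.sum_univ_castSucc]
    simp only [Fin.lastCases_castSucc, Fin.lastCases_last, add_zero]
    exact sum_ite_col (hm := hm) n x.2

lemma degreeOf_Dpoly_le (hm : m < N) (nn : Fin (m+1) → ZMod N) (j : Fin (m+1))
    (x : Fin (m+1) × ZMod N) :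
    (Dpoly (F := F) nn j).degreeOf x ≤ if x.2 ∈ Scol m (nn j) then 1 else 0 := by
  classical
  rw [Dpoly]
  refine le_trans (degreeOf_det_le (Dmat nn j) x
    (fun t => if x.2 = nn j - 1 - ((t : ℕ) : ZMod N) then 1 else 0) ?_) ?_
  · intro t r
    rw [Dmat]
    simp only [Matrix.of_apply]
    by_cases hc : (nn j - 1 - ((t : ℕ) : ZMod N)) ∈ Scol m (nn (j.succAbove r))
    · rw [if_pos hc]
      simp
    · rw [if_neg hc]
      by_cases h : x = (j.succAbove r, nn j - 1 - ((t : ℕ) : ZMod N))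
      · rw [if_pos (by rw [h]), h, MvPolynomial.degreeOf_X]
        simp
      · rw [MvPolynomial.degreeOf_X, if_neg h]
        exact Nat.zero_le _
  · exact sum_ite_col (hm := hm) (nn j) x.2

/-- the key polynomial whose nonvanishing at `F` certifies recoverability for the
worker set enumerated by `nn` -/
noncomputable def Ppoly (nn : Fin (m+1) → ZMod N) : MvPolynomial (Fin (m+1) × ZMod N) F :=
  (Matrix.of fun j i =>
    cg (fun i' s => (MvPolynomial.X (i', s) : MvPolynomial (Fin (m+1) × ZMod N) F)) (nn j) i).det

lemma degreeOf_Ppoly_le (hm : m < N) (nn : Fin (m+1) → ZMod N) (x : Fin (m+1) × ZMod N) :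
    (Ppoly (F := F) nn).degreeOf x ≤ ∑ j, if x.2 ∈ Scol m (nn j) then 1 else 0 := by
  classical
  rw [Ppoly]
  refine degreeOf_det_le _ x (fun j => if x.2 ∈ Scol m (nn j) then 1 else 0) ?_
  intro j i
  simp only [Matrix.of_apply]
  exact degreeOf_cg_le hm (nn j) i x

lemma sum_degbound (hm : m < N) (nn : Fin (m+1) → ZMod N) :
    ∑ x : Fin (m+1) × ZMod N, (∑ j, if x.2 ∈ Scol m (nn j) then (1:ℕ) else 0)
      ≤ (m+1) * ((m+1) * m) := by
  classical
  rw [Fintype.sum_prod_type]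
  have hone : ∀ i : Fin (m+1),
      ∑ s : ZMod N, (∑ j, if s ∈ Scol m (nn j) then (1:ℕ) else 0) ≤ (m+1) * m := by
    intro i
    rw [Finset.sum_comm]
    have : ∀ j : Fin (m+1), ∑ s : ZMod N, (if s ∈ Scol m (nn j) then (1:ℕ) else 0) ≤ m := by
      intro j
      rw [Finset.sum_ite_mem, Finset.univ_inter]
      simpa using card_Scol_le (m := m) (nn j)
    calc ∑ j : Fin (m+1), ∑ s : ZMod N, (if s ∈ Scol m (nn j) then (1:ℕ) else 0)
        ≤ ∑ _j : Fin (m+1), m := Finset.sum_le_sum (fun j _ => this j)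
      _ = (m+1) * m := by simp [mul_comm]
  calc ∑ i : Fin (m+1), ∑ s : ZMod N, (∑ j, if s ∈ Scol m (nn j) then (1:ℕ) else 0)
      ≤ ∑ _i : Fin (m+1), (m+1) * m := Finset.sum_le_sum (fun i _ => hone i)
    _ = (m+1) * ((m+1) * m) := by simp [mul_comm]


lemma cg_congr {R : Type*} [CommRing R] (g g' : Fin (m+1) → ZMod N → R) (h : g = g')
    (n : ZMod N) (i : Fin (m+1)) : cg g n i = cg g' n i := by rw [h]

lemma eval_cg_X (y : (Fin (m+1) × ZMod N) → F) (n : ZMod N) (i : Fin (m+1)) :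
    MvPolynomial.eval y (cg (fun i' s => (MvPolynomial.X (i', s) :
        MvPolynomial (Fin (m+1) × ZMod N) F)) n i)
      = cg (fun i' s => y (i', s)) n i := by
  rw [cg_map (MvPolynomial.eval y)]
  exact cg_congr _ _ (by funext i' s; rw [MvPolynomial.eval_X]) n i

lemma eval_Ppoly_eq (y : (Fin (m+1) × ZMod N) → F) (nn : Fin (m+1) → ZMod N) :
    MvPolynomial.eval y (Ppoly (F := F) nn)
      = (Matrix.of fun j i => cg (fun i' s => y (i', s)) (nn j) i).det := by
  rw [Ppoly, RingHom.map_det]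
  congr 1
  ext j i
  rw [RingHom.mapMatrix_apply, Matrix.map_apply, Matrix.of_apply, Matrix.of_apply, eval_cg_X]

lemma mem_Scol_self (t' : Fin m) (n : ZMod N) : n - 1 - ((t' : ℕ) : ZMod N) ∈ Scol m n := by
  rw [Scol, Finset.mem_image]
  exact ⟨(t' : ℕ), Finset.mem_range.mpr t'.2, rfl⟩

lemma eval_Ppoly_point (hm : m + 1 ≤ N) (nn : Fin (m+1) → ZMod N)
    (x : (Fin (m+1) × ZMod N) → F)
    (hx : ∀ j, MvPolynomial.eval x (Dpoly (F := F) nn j) ≠ 0) :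
    MvPolynomial.eval (fun p : Fin (m+1) × ZMod N =>
        if p.2 ∈ Scol m (nn p.1) then 0 else x p) (Ppoly (F := F) nn) ≠ 0 := by
  classical
  set F₀ : Fin (m+1) → ZMod N → F := fun k s => if s ∈ Scol m (nn k) then 0 else x (k, s)
    with hF₀
  have hF₀y : (fun p : Fin (m+1) × ZMod N => if p.2 ∈ Scol m (nn p.1) then 0 else x p)
      = fun p : Fin (m+1) × ZMod N => F₀ p.1 p.2 := by
    funext p
    rw [hF₀]
  rw [hF₀y, eval_Ppoly_eq]
  have hentry : (fun i' s => (fun p : Fin (m+1) × ZMod N => F₀ p.1 p.2) (i', s)) = F₀ := rfl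
  -- off-diagonal entries vanish
  have hoff : ∀ j i : Fin (m+1), i ≠ j → cg F₀ (nn j) i = 0 := by
    intro j i hij
    rw [cg]
    apply Matrix.det_eq_zero_of_column_eq_zero j
    intro t
    refine Fin.lastCases ?_ (fun t' => ?_) t
    · rw [Wg_apply_last, Pi.single_eq_of_ne (Ne.symm hij)]
    · rw [Wg_apply_castSucc]
      simp only [hF₀]
      exact if_pos (mem_Scol_self t' (nn j))
  -- diagonal entries are nonzero
  have hdiag : ∀ j : Fin (m+1), cg F₀ (nn j) j ≠ 0 := by
    intro j
    rw [cg, Matrix.det_succ_column _ j]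
    rw [Finset.sum_eq_single (Fin.last m)]
    · rw [Wg_apply_last, Pi.single_eq_same, mul_one]
      have hsub : (Wg F₀ (nn j) (Pi.single j 1)).submatrix (Fin.last m).succAbove j.succAbove
          = (Dmat (F := F) nn j).map (MvPolynomial.eval x) := by
        ext t' r
        rw [Matrix.submatrix_apply, Fin.succAbove_last_apply, Wg_apply_castSucc,
          Matrix.map_apply, Dmat]
        simp only [Matrix.of_apply]
        by_cases hc : (nn j - 1 - ((t' : ℕ) : ZMod N)) ∈ Scol m (nn (j.succAbove r))
        · rw [if_pos hc, map_zero]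
          simp only [hF₀]
          rw [if_pos hc]
        · rw [if_neg hc, MvPolynomial.eval_X]
          simp only [hF₀]
          rw [if_neg hc]
      rw [hsub]
      apply mul_ne_zero
      · apply pow_ne_zero
        exact neg_ne_zero.mpr one_ne_zero
      · have hmd := RingHom.map_det (MvPolynomial.eval x) (Dmat (F := F) nn j)
        rw [RingHom.mapMatrix_apply] at hmd
        rw [← hmd]
        exact hx j
    · intro t _ ht
      obtain ⟨t', rfl⟩ := Fin.exists_castSucc_eq.mpr ht
      rw [Wg_apply_castSucc]
      simp only [hF₀]
      rw [if_pos (mem_Scol_self t' (nn j))]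
      ring
    · intro h
      exact absurd (Finset.mem_univ _) h
  have hdiagm : (Matrix.of fun j i => cg F₀ (nn j) i) =
      Matrix.diagonal (fun j => cg F₀ (nn j) j) := by
    ext j i
    rw [Matrix.of_apply, Matrix.diagonal_apply]
    by_cases h : j = i
    · rw [if_pos h, h]
    · rw [if_neg h, hoff j i (Ne.symm h)]
  rw [hentry, hdiagm, Matrix.det_diagonal]
  exact Finset.prod_ne_zero_iff.mpr (fun j _ => hdiag j)

end PolyAux


/-- K = N headline achievability: with `K = N`, `K_c = N_r` and the cyclic
assignment `Z_n = {n, …, n+(N−N_r)} ⊆ ZMod N`, the number of demand matrices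
`F ∈ 𝔽_q^{N_r × N}` admitting one linear combination `b_n` per worker `n` (supported on
`Z_n`) such that for every set `A` of `N_r` workers every row of `F` lies in the span of
`{b_n : n ∈ A}`, is at least `(1 − C(N,N_r)·(N(N_r−1)² + N_r!·N_r²)/q) · q^{N_r·N}`. -/
theorem stmt_16 {𝔽 : Type} [Field 𝔽] [Fintype 𝔽] (q : ℕ) (hq : Fintype.card 𝔽 = q)
    (N Nr : ℕ) [NeZero N] (hNr : 0 < Nr) (hNrN : Nr ≤ N) :
    let Z : ZMod N → Finset (ZMod N) := fun n =>
      (Finset.range (N - Nr + 1)).image fun j : ℕ => n + (j : ZMod N)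
    let Good : Matrix (Fin Nr) (ZMod N) 𝔽 → Prop := fun F =>
      ∃ b : ZMod N → (ZMod N → 𝔽),
        (∀ n : ZMod N, ∀ c : ZMod N, c ∉ Z n → b n c = 0) ∧
        ∀ A : Finset (ZMod N), A.card = Nr →
          ∀ i : Fin Nr, F i ∈ Submodule.span 𝔽 (b '' (A : Set (ZMod N)))
    ((1 : ℚ) - (N.choose Nr : ℚ) *
        ((N : ℚ) * ((Nr : ℚ) - 1) ^ 2 + (Nat.factorial Nr : ℚ) * (Nr : ℚ) ^ 2) / (q : ℚ))
      * (q : ℚ) ^ (Nr * N)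
    ≤ (Nat.card {F : Matrix (Fin Nr) (ZMod N) 𝔽 // Good F} : ℚ) := by
  intro Z Good
  classical
  obtain ⟨m, rfl⟩ : ∃ m, Nr = m + 1 := ⟨Nr - 1, by omega⟩
  have hmN : m + 1 ≤ N := hNrN
  have hN0 : 0 < N := Nat.pos_of_ne_zero (NeZero.ne N)
  have hq0 : 0 < q := hq ▸ Fintype.card_pos
  set M : ℕ := (m + 1) * N with hM
  have hM1 : 1 ≤ M := by
    rw [hM]; exact Nat.mul_pos (Nat.succ_pos m) hN0
  set B : ℕ := N.choose (m+1) * (N * m^2 + Nat.factorial (m+1) * (m+1)^2) with hB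
  -- the ℚ bracket numerator equals B
  have hY : (N.choose (m+1) : ℚ) *
      ((N : ℚ) * (((m+1 : ℕ) : ℚ) - 1) ^ 2 + (Nat.factorial (m+1) : ℚ) * ((m+1 : ℕ) : ℚ) ^ 2)
      = (B : ℚ) := by
    rw [hB]; push_cast; ring
  have hqM : (q : ℚ) ^ M = (q : ℚ) ^ (M - 1) * (q : ℚ) := by
    rw [← pow_succ]; congr 1; omega
  have hqQ : (q : ℚ) ≠ 0 := by positivity
  have hexpand : ((1 : ℚ) - (B : ℚ) / (q : ℚ)) * (q : ℚ) ^ M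
      = (q : ℚ) ^ M - (B : ℚ) * (q : ℚ) ^ (M - 1) := by
    rw [hqM]; field_simp
  have hgoal0 : ((1 : ℚ) - (N.choose (m+1) : ℚ) *
      ((N : ℚ) * (((m+1 : ℕ) : ℚ) - 1) ^ 2 + (Nat.factorial (m+1) : ℚ) * ((m+1 : ℕ) : ℚ) ^ 2)
        / (q : ℚ)) * (q : ℚ) ^ M
      = (q : ℚ) ^ M - (B : ℚ) * (q : ℚ) ^ (M - 1) := by
    rw [← hexpand, hY]
  rw [hgoal0]
  have hcount0 : (0 : ℚ) ≤ (Nat.card {F : Matrix (Fin (m+1)) (ZMod N) 𝔽 // Good F} : ℚ) :=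
    Nat.cast_nonneg _
  by_cases hcase : q ≤ B
  · -- trivial case: the lower bound is nonpositive
    refine le_trans ?_ hcount0
    have h1 : (q : ℚ) ^ M ≤ (B : ℚ) * (q : ℚ) ^ (M - 1) := by
      rw [hqM, mul_comm ((q:ℚ)^(M-1)) (q:ℚ)]
      apply mul_le_mul_of_nonneg_right ?_ (by positivity)
      exact_mod_cast hcase
    linarith
  push_neg at hcase
  -- enumerations of the worker sets
  have hchoice : ∀ A : Finset (ZMod N), A.card = m + 1 →
      ∃ nn : Fin (m+1) → ZMod N, Function.Injective nn ∧ ∀ j, nn j ∈ A := by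
    intro A hA
    refine ⟨fun j => ((Finset.equivFinOfCardEq hA).symm j : ZMod N), ?_, ?_⟩
    · intro a b h
      exact (Finset.equivFinOfCardEq hA).symm.injective (Subtype.coe_injective h)
    · intro j
      exact ((Finset.equivFinOfCardEq hA).symm j).2
  choose nnf hnninj hnnmem using hchoice
  set D0 : ℕ := (m+1) * ((m+1) * m) with hD0
  have hD0F : D0 ≤ N * m^2 + Nat.factorial (m+1) * (m+1)^2 := by
    have h1 : m ≤ Nat.factorial (m+1) :=
      le_trans (Nat.le_succ m) (Nat.self_le_factorial (m+1))
    have h2 : D0 ≤ Nat.factorial (m+1) * (m+1)^2 := by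
      calc D0 = m * ((m+1) * (m+1)) := by rw [hD0]; ring
        _ ≤ Nat.factorial (m+1) * ((m+1) * (m+1)) := Nat.mul_le_mul_right _ h1
        _ = Nat.factorial (m+1) * (m+1)^2 := by ring
    exact le_trans h2 (Nat.le_add_left _ _)
  have hD0B : D0 ≤ B := by
    refine le_trans hD0F ?_
    rw [hB]
    exact Nat.le_mul_of_pos_left _ (Nat.choose_pos hmN)
  have hD0q : D0 < q := lt_of_le_of_lt hD0B hcase
  -- nonvanishing of the certificate polynomials
  have hPne : ∀ (A : Finset (ZMod N)) (hA : A.card = m+1),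
      (Ppoly (F := 𝔽) (nnf A hA)) ≠ 0 := by
    intro A hA
    have hQne : (∏ j : Fin (m+1), Dpoly (F := 𝔽) (nnf A hA) j) ≠ 0 :=
      Finset.prod_ne_zero_iff.mpr (fun j _ => Dpoly_ne_zero hmN _ (hnninj A hA) j)
    have hdQ : ∀ x : Fin (m+1) × ZMod N,
        (∏ j : Fin (m+1), Dpoly (F := 𝔽) (nnf A hA) j).degreeOf x
          ≤ ∑ j : Fin (m+1), if x.2 ∈ Scol m (nnf A hA j) then 1 else 0 :=
      fun x => le_trans (MvPolynomial.degreeOf_prod_le x _ _)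
        (Finset.sum_le_sum fun j _ => degreeOf_Dpoly_le (by omega) _ j x)
    have hsum : ∑ x : Fin (m+1) × ZMod N,
        (∑ j : Fin (m+1), if x.2 ∈ Scol m (nnf A hA j) then (1:ℕ) else 0) < Fintype.card 𝔽 := by
      rw [hq]
      exact lt_of_le_of_lt (sum_degbound (by omega) _) hD0q
    obtain ⟨x, hx⟩ := sz_exists _ hQne _ hdQ hsum
    have hxj : ∀ j, MvPolynomial.eval x (Dpoly (F := 𝔽) (nnf A hA) j) ≠ 0 := by
      intro j hj
      apply hx
      rw [map_prod]
      exact Finset.prod_eq_zero (Finset.mem_univ j) hj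
    intro h0
    have hcontra := eval_Ppoly_point hmN (nnf A hA) x hxj
    rw [h0, map_zero] at hcontra
    exact hcontra rfl
  -- matrix-level and vector-level certificate predicates
  set PM : Matrix (Fin (m+1)) (ZMod N) 𝔽 → Prop := fun Fm =>
    ∀ (A : Finset (ZMod N)) (hA : A.card = m+1),
      MvPolynomial.eval (fun p : Fin (m+1) × ZMod N => Fm p.1 p.2)
        (Ppoly (F := 𝔽) (nnf A hA)) ≠ 0 with hPM
  set PV : ((Fin (m+1) × ZMod N) → 𝔽) → Prop := fun v =>
    ∀ (A : Finset (ZMod N)) (hA : A.card = m+1),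
      MvPolynomial.eval v (Ppoly (F := 𝔽) (nnf A hA)) ≠ 0 with hPV
  -- PM implies Good
  have hPMGood : ∀ Fm, PM Fm → Good Fm := by
    intro Fm hFm
    refine ⟨fun n s => (Wg (fun i u => Fm i u) n (fun i => Fm i s)).det, ?_, ?_⟩
    · -- support
      intro n c hc
      have hcS : c ∈ Scol m n := mem_Scol_of_not_mem_Z hmN n c hc
      rw [Scol, Finset.mem_image] at hcS
      obtain ⟨jn, hjn, rfl⟩ := hcS
      rw [Finset.mem_range] at hjn
      exact det_Wg_col_eq_zero (fun i u => Fm i u) n ⟨jn, hjn⟩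
    · -- span
      intro A hA i
      set nn := nnf A hA with hnn
      set C : Matrix (Fin (m+1)) (Fin (m+1)) 𝔽 :=
        Matrix.of fun j i' => cg (fun i'' u => Fm i'' u) (nn j) i' with hC
      have hdet : C.det ≠ 0 := by
        have h1 := hFm A hA
        rw [eval_Ppoly_eq] at h1
        exact h1
      have hCinv : C⁻¹ * C = 1 := Matrix.nonsing_inv_mul C (isUnit_iff_ne_zero.mpr hdet)
      have hb : ∀ j, (fun s => (Wg (fun i' u => Fm i' u) (nn j) (fun i' => Fm i' s)).det)
          = (C * Matrix.of (fun i' u => Fm i' u)) j := by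
        intro j
        funext s
        rw [det_Wg_eq_sum, Matrix.mul_apply]
        refine Finset.sum_congr rfl (fun i' _ => ?_)
        rw [hC]
        simp only [Matrix.of_apply]
        ring
      have hFeq : Matrix.of (fun i' u => Fm i' u) = C⁻¹ * (C * Matrix.of (fun i' u => Fm i' u)) := by
        rw [← Matrix.mul_assoc, hCinv, Matrix.one_mul]
      have hFi : Fm i = fun s => ∑ j, C⁻¹ i j * (C * Matrix.of (fun i' u => Fm i' u)) j s := by
        conv_lhs => rw [show Fm i = (Matrix.of (fun i' u => Fm i' u)) i from rfl, hFeq]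
        funext s
        rw [Matrix.mul_apply]
      rw [hFi]
      have : (fun s => ∑ j, C⁻¹ i j * (C * Matrix.of (fun i' u => Fm i' u)) j s)
          = ∑ j : Fin (m+1), C⁻¹ i j • (C * Matrix.of (fun i' u => Fm i' u)) j := by
        funext s
        rw [Finset.sum_apply]
        simp only [Pi.smul_apply, smul_eq_mul]
      rw [this]
      apply Submodule.sum_mem
      intro j _
      apply Submodule.smul_mem
      apply Submodule.subset_span
      exact ⟨nn j, hnnmem A hA j, hb j⟩
  -- counting
  have hcardι : Fintype.card (Fin (m+1) × ZMod N) = M := by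
    rw [Fintype.card_prod, Fintype.card_fin, ZMod.card, hM]
  have hbadA : ∀ (A : Finset (ZMod N)) (hA : A.card = m+1),
      (Finset.univ.filter (fun v : (Fin (m+1) × ZMod N) → 𝔽 =>
        MvPolynomial.eval v (Ppoly (F := 𝔽) (nnf A hA)) = 0)).card ≤ D0 * q ^ (M - 1) := by
    intro A hA
    have h1 := sz_zero_count (Ppoly (F := 𝔽) (nnf A hA)) (hPne A hA)
      (fun x => ∑ j : Fin (m+1), if x.2 ∈ Scol m (nnf A hA j) then 1 else 0)
      (fun x => degreeOf_Ppoly_le (by omega) _ x)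
    rw [hq, hcardι] at h1
    refine le_trans h1 (Nat.mul_le_mul_right _ ?_)
    exact sum_degbound (by omega) _
  set badU : Finset ((Fin (m+1) × ZMod N) → 𝔽) :=
    (Finset.univ.powersetCard (m+1)).biUnion (fun A =>
      if h : A.card = m+1 then
        Finset.univ.filter (fun v : (Fin (m+1) × ZMod N) → 𝔽 =>
          MvPolynomial.eval v (Ppoly (F := 𝔽) (nnf A h)) = 0)
      else ∅) with hbadU
  have hbadsub : Finset.univ.filter (fun v => ¬ PV v) ⊆ badU := by
    intro v hv
    rw [Finset.mem_filter] at hv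
    have hv2 : ¬ ∀ (A : Finset (ZMod N)) (_hA : A.card = m+1),
        MvPolynomial.eval v (Ppoly (F := 𝔽) (nnf A _hA)) ≠ 0 := hv.2
    push_neg at hv2
    obtain ⟨A, hA, hzero⟩ := hv2
    rw [hbadU, Finset.mem_biUnion]
    refine ⟨A, ?_, ?_⟩
    · rw [Finset.mem_powersetCard]
      exact ⟨Finset.subset_univ _, hA⟩
    · rw [dif_pos hA, Finset.mem_filter]
      exact ⟨Finset.mem_univ _, hzero⟩
  have hbadcard : badU.card ≤ N.choose (m+1) * (D0 * q ^ (M - 1)) := by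
    refine le_trans (Finset.card_biUnion_le) ?_
    have h1 : ∀ A ∈ Finset.univ.powersetCard (m+1),
        (if h : A.card = m+1 then
          Finset.univ.filter (fun v : (Fin (m+1) × ZMod N) → 𝔽 =>
            MvPolynomial.eval v (Ppoly (F := 𝔽) (nnf A h)) = 0)
        else ∅).card ≤ D0 * q ^ (M - 1) := by
      intro A hA
      by_cases h : A.card = m+1
      · rw [dif_pos h]
        exact hbadA A h
      · rw [dif_neg h]
        simp
    refine le_trans (Finset.sum_le_sum h1) ?_
    rw [Finset.sum_const, smul_eq_mul]
    apply Nat.mul_le_mul_right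
    rw [Finset.card_powersetCard, Finset.card_univ, ZMod.card]
  have hcardfun : (Finset.univ : Finset ((Fin (m+1) × ZMod N) → 𝔽)).card = q ^ M := by
    rw [Finset.card_univ, Fintype.card_fun, hq, hcardι]
  have hsplitV := Finset.card_filter_add_card_filter_not
    (s := (Finset.univ : Finset ((Fin (m+1) × ZMod N) → 𝔽))) (p := PV)
  have hPVcount : q ^ M ≤ (Finset.univ.filter PV).card + N.choose (m+1) * (D0 * q ^ (M-1)) := by
    have h2 : (Finset.univ.filter (fun v => ¬ PV v)).card ≤ N.choose (m+1) * (D0 * q ^ (M-1)) :=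
      le_trans (Finset.card_le_card hbadsub) hbadcard
    omega
  -- transfer to matrices
  have hVM : (Finset.univ.filter PV).card =
      (Finset.univ.filter PM).card := by
    apply Finset.card_bij (fun (v : (Fin (m+1) × ZMod N) → 𝔽) _ => (fun i s => v (i, s) :
      Matrix (Fin (m+1)) (ZMod N) 𝔽))
    · intro v hv
      rw [Finset.mem_filter] at hv
      exact Finset.mem_filter.mpr ⟨Finset.mem_univ _, hv.2⟩
    · intro v₁ _ v₂ _ h
      funext p
      have := congrFun (congrFun h p.1) p.2
      simpa using this
    · intro Fm hFm
      replace hFm := Finset.mem_filter.mp hFm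
      exact ⟨fun p => Fm p.1 p.2, Finset.mem_filter.mpr ⟨Finset.mem_univ _, hFm.2⟩, rfl⟩
  have hMG : (Finset.univ.filter PM).card ≤ (Finset.univ.filter Good).card := by
    apply Finset.card_le_card
    intro Fm hFm
    rw [Finset.mem_filter] at hFm ⊢
    exact ⟨Finset.mem_univ _, hPMGood Fm hFm.2⟩
  have hNatcard : (Finset.univ.filter Good).card
      = Nat.card {F : Matrix (Fin (m+1)) (ZMod N) 𝔽 // Good F} := by
    rw [Nat.card_eq_fintype_card, Fintype.card_subtype]
  -- final arithmetic in ℚ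
  have hfinal : (q : ℚ) ^ M - (N.choose (m+1) : ℚ) * ((D0 : ℚ) * (q : ℚ) ^ (M-1))
      ≤ (Nat.card {F : Matrix (Fin (m+1)) (ZMod N) 𝔽 // Good F} : ℚ) := by
    rw [← hNatcard]
    have h1 : ((Finset.univ.filter PV).card : ℚ)
        ≤ ((Finset.univ.filter Good).card : ℚ) := by
      exact_mod_cast le_trans (le_of_eq hVM) hMG
    have h2 : (q : ℚ) ^ M ≤ ((Finset.univ.filter PV).card : ℚ)
        + (N.choose (m+1) : ℚ) * ((D0 : ℚ) * (q : ℚ) ^ (M-1)) := by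
      exact_mod_cast hPVcount
    linarith
  have hBD : (N.choose (m+1) : ℚ) * ((D0 : ℚ) * (q : ℚ) ^ (M-1))
      ≤ (B : ℚ) * (q : ℚ) ^ (M-1) := by
    have h1 : (N.choose (m+1) : ℚ) * (D0 : ℚ) ≤ (B : ℚ) := by
      have : N.choose (m+1) * D0 ≤ B := by
        rw [hB]
        exact Nat.mul_le_mul_left _ hD0F
      exact_mod_cast this
    calc (N.choose (m+1) : ℚ) * ((D0 : ℚ) * (q : ℚ) ^ (M-1))
        = ((N.choose (m+1) : ℚ) * (D0 : ℚ)) * (q : ℚ) ^ (M-1) := by ring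
      _ ≤ (B : ℚ) * (q : ℚ) ^ (M-1) := mul_le_mul_of_nonneg_right h1 (by positivity)
  linarith
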